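/- For every integer m ≥ 1 and real x, ∑_{r=1}^m C(m,r)·x^{m−r}·(1−x)^r/r = ∑_{r=0}^{m−1} x^r/(m−r) − H_m·x^m, where H_m is the m-th harmonic number. -/

import Mathlib

open Finset

private lemma bh_key (m k : ℕ) (x : ℝ) :
      ((m+1).choose (k+1) : ℝ) * x ^ (m+1-(k+1)) * (1-x)^(k+1) / ((k:ℝ)+1)
        = (m.choose (k+1) : ℝ) * x ^ (m+1-(k+1)) * (1-x)^(k+1) / ((k:ℝ)+1)
          + ((m+1).choose (k+1) : ℝ) * x ^ (m+1-(k+1)) * (1-x)^(k+1) / ((m:ℝ)+1) := by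
  have h1 : ((m:ℝ)+1) * (m.choose k : ℝ) = ((m+1).choose (k+1) : ℝ) * ((k:ℝ)+1) := by
    exact_mod_cast congrArg (Nat.cast (R := ℝ)) (Nat.add_one_mul_choose_eq m k)
  have hc : ((m+1).choose (k+1) : ℝ) = (m.choose k : ℝ) + (m.choose (k+1) : ℝ) := by
    exact_mod_cast congrArg (Nat.cast (R := ℝ)) (Nat.choose_succ_succ' m k)
  have hk1 : ((k:ℝ)+1) ≠ 0 := by positivity
  have hm1 : ((m:ℝ)+1) ≠ 0 := by positivity
  have hs : ((m+1).choose (k+1) : ℝ)/((k:ℝ)+1)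
      = (m.choose (k+1):ℝ)/((k:ℝ)+1) + ((m+1).choose (k+1):ℝ)/((m:ℝ)+1) := by
    have h2 : ((m+1).choose (k+1):ℝ)/((m:ℝ)+1) = (m.choose k:ℝ)/((k:ℝ)+1) := by
      rw [div_eq_div_iff hm1 hk1]; linear_combination -h1
    rw [h2, ← add_div, add_comm ((m.choose (k+1)):ℝ), ← hc]
  have expand : ∀ (A c : ℝ), A * x ^ (m+1-(k+1)) * (1-x)^(k+1) / c
      = (A/c) * (x ^ (m+1-(k+1)) * (1-x)^(k+1)) := by intros; ring
  rw [expand, expand, expand, hs]; ring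

private lemma bh_lhs_rec (m : ℕ) (x : ℝ) :
    ∑ r ∈ Icc 1 (m+1), ((m+1).choose r : ℝ) * x ^ (m+1-r) * (1-x)^r / r
      = x * ∑ r ∈ Icc 1 m, (m.choose r : ℝ) * x ^ (m-r) * (1-x)^r / r
        + (1 - x^(m+1)) / ((m:ℝ)+1) := by
  have key : ∀ r ∈ Icc 1 (m+1),
      ((m+1).choose r : ℝ) * x ^ (m+1-r) * (1-x)^r / r
        = (m.choose r : ℝ) * x ^ (m+1-r) * (1-x)^r / r
          + ((m+1).choose r : ℝ) * x ^ (m+1-r) * (1-x)^r / ((m:ℝ)+1) := by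
    intro r hr
    obtain ⟨k, rfl⟩ : ∃ k, r = k + 1 := ⟨r - 1, by have := (mem_Icc.mp hr).1; omega⟩
    have := bh_key m k x
    push_cast
    push_cast at this
    convert this using 3
  rw [Finset.sum_congr rfl key, Finset.sum_add_distrib]
  congr 1
  · rw [Finset.sum_Icc_succ_top (by omega : 1 ≤ m+1)]
    rw [Nat.choose_succ_self]
    simp only [Nat.cast_zero, zero_mul, zero_div, add_zero]
    rw [Finset.mul_sum]
    apply Finset.sum_congr rfl
    intro r hr
    have hrm : r ≤ m := (mem_Icc.mp hr).2
    have h : m + 1 - r = (m - r) + 1 := by omega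
    rw [h, pow_succ]
    ring
  · have hpow : ∑ r ∈ range (m+2), ((m+1).choose r : ℝ) * x^(m+1-r) * (1-x)^r = 1 := by
      have h := add_pow (1-x) x (m+1)
      simp only [sub_add_cancel, one_pow] at h
      conv_rhs => rw [h]
      apply Finset.sum_congr rfl
      intro r hr
      ring
    have hsplit : ∑ r ∈ range (m+2), ((m+1).choose r : ℝ) * x^(m+1-r) * (1-x)^r
        = ((m+1).choose 0 : ℝ) * x^(m+1) * (1-x)^0
          + ∑ r ∈ Icc 1 (m+1), ((m+1).choose r : ℝ) * x^(m+1-r) * (1-x)^r := by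
      rw [Finset.range_eq_Ico, ← Finset.Ico_add_one_right_eq_Icc]
      rw [Finset.sum_eq_sum_Ico_succ_bot (by omega : 0 < m + 2)]
      norm_num
      rfl
    have h2 : ∑ r ∈ Icc 1 (m+1), ((m+1).choose r : ℝ) * x^(m+1-r) * (1-x)^r
        = 1 - x^(m+1) := by
      rw [hpow] at hsplit
      simp only [Nat.choose_zero_right, Nat.cast_one, one_mul, pow_zero, mul_one] at hsplit
      linarith
    rw [← Finset.sum_div, h2]

private lemma bh_rhs_rec (m : ℕ) (x : ℝ) :
    (∑ r ∈ range (m+1), x^r / (((m:ℝ)+1) - r)) - (harmonic (m+1) : ℝ) * x^(m+1)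
      = x * ((∑ r ∈ range m, x^r / ((m:ℝ) - r)) - (harmonic m : ℝ) * x^m)
        + (1 - x^(m+1)) / ((m:ℝ)+1) := by
  rw [Finset.sum_range_succ']
  have hh : (harmonic (m+1) : ℝ) = (harmonic m : ℝ) + 1/((m:ℝ)+1) := by
    rw [harmonic_succ]; push_cast; ring
  have hterm : ∀ i ∈ range m, x^(i+1) / (((m:ℝ)+1) - ((i:ℝ)+1)) = x * (x^i / ((m:ℝ) - i)) := by
    intro i _
    rw [pow_succ]
    have : ((m:ℝ)+1) - ((i:ℝ)+1) = (m:ℝ) - i := by ring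
    rw [this]; ring
  push_cast
  rw [Finset.sum_congr rfl hterm, hh, mul_sub, Finset.mul_sum]
  ring_nf

theorem binomial_harmonic_polynomial (m : ℕ) (hm : 1 ≤ m) (x : ℝ) :
    ∑ r ∈ Finset.Icc 1 m, (m.choose r : ℝ) * x ^ (m - r) * (1 - x) ^ r / (r : ℝ) =
      (∑ r ∈ Finset.range m, x ^ r / ((m : ℝ) - r)) - (harmonic m : ℝ) * x ^ m := by
  induction m, hm using Nat.le_induction with
  | base =>
    simp [harmonic_succ]
  | succ n hn ih =>
    rw [bh_lhs_rec n x, ih]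
    have := bh_rhs_rec n x
    push_cast at this ⊢
    linarith [this]
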